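/- arXiv:2408.09938 — 4 statements merged into one kernel-verified Lean document; each statement's English description precedes it below -/
import Mathlib

section
/- Let A ∈ {0,*}^{n×n} and B ∈ {0,*}^{n×q} be patterns with B having generic full column rank q. Then the minimum of ||C||_0 over output patterns C ∈ {0,*}^{n×n} such that (A,B,C) is GSIO and every row of C has at most one free entry (dedicated sensors) is equal to the minimum of ||C||_0 over all output patterns C ∈ {0,*}^{n×n} such that (A,B,C) is GSIO (no dedicated-row restriction). (Problems 𝒫 and 𝒫′ have the same optimal value.) -/
/-- The realization of a structured pattern (a set of free positions) determined by an
assignment `v` of complex values to its free entries: the matrix vanishes outside the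
free positions. -/
def Pattern.realize {a b : Type*} [DecidableEq a] [DecidableEq b] (P : Finset (a × b)) (v : {e // e ∈ P} → ℂ) :
    Matrix a b ℂ :=
  Matrix.of fun i j => if h : (i, j) ∈ P then v ⟨(i, j), h⟩ else 0

/-- The structured system `(A, B, C)` (with zero feedthrough) is generically state and
input observable (GSIO): there is a nonzero polynomial in the free entries of the
patterns such that every realization at which it does not vanish has a Rosenbrock
matrix `[[Ã - s I, B̃], [C̃, 0]]` of full column rank `n + q` for every `s ∈ ℂ`. -/
def IsGSIO {n q m : ℕ} (A : Finset (Fin n × Fin n)) (B : Finset (Fin n × Fin q))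
    (C : Finset (Fin m × Fin n)) : Prop :=
  ∃ p : MvPolynomial (({e // e ∈ A} ⊕ {e // e ∈ B}) ⊕ {e // e ∈ C}) ℂ, p ≠ 0 ∧
    ∀ v : (({e // e ∈ A} ⊕ {e // e ∈ B}) ⊕ {e // e ∈ C}) → ℂ,
      MvPolynomial.eval v p ≠ 0 → ∀ s : ℂ,
        (Matrix.fromBlocks
            (Pattern.realize A (fun e => v (Sum.inl (Sum.inl e))) -
              s • (1 : Matrix (Fin n) (Fin n) ℂ))
            (Pattern.realize B (fun e => v (Sum.inl (Sum.inr e))))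
            (Pattern.realize C (fun e => v (Sum.inr e))) 0).rank = n + q


open MvPolynomial in
lemma aux_eval_aeval {σ τ : Type*} (w : τ → ℂ) (f : σ → MvPolynomial τ ℂ) (p : MvPolynomial σ ℂ) :
    eval w (aeval f p) = eval (fun x => eval w (f x)) p := by
  induction p using MvPolynomial.induction_on with
  | C a => simp
  | add p q hp hq => simp only [map_add, hp, hq]
  | mul_X p i hp => simp only [map_mul, aeval_X, eval_mul, eval_X, hp]

lemma rank_eq_card_iff {α β : Type*} [Fintype α] [Fintype β] (M : Matrix α β ℂ) :
    M.rank = Fintype.card β ↔ ∀ x : β → ℂ, M.mulVec x = 0 → x = 0 := by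
  rw [← Matrix.ker_mulVecLin_eq_bot_iff]
  have hr : M.rank = Module.finrank ℂ (LinearMap.range M.mulVecLin) := rfl
  have hrn := LinearMap.finrank_range_add_finrank_ker M.mulVecLin
  rw [Module.finrank_pi] at hrn
  constructor
  · intro h
    rw [← Submodule.finrank_eq_zero (R := ℂ)]
    omega
  · intro h
    rw [h, finrank_bot] at hrn
    omega

open MvPolynomial in
lemma exists_subst_ne_zero {σ τ : Type*} (p : MvPolynomial (σ ⊕ τ) ℂ) (hp : p ≠ 0) :
    ∃ c : τ → MvPolynomial σ ℂ, aeval (Sum.elim X c) p ≠ 0 := by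
  by_contra h
  push_neg at h
  apply hp
  apply MvPolynomial.funext
  intro v
  have h0 := h fun t => C (v (Sum.inr t))
  have h2 := congrArg (eval fun s => v (Sum.inl s)) h0
  rw [aux_eval_aeval] at h2
  have he : (fun x => eval (fun s => v (Sum.inl s)) (Sum.elim X (fun t => C (v (Sum.inr t))) x)) = v := by
    funext x; cases x <;> simp
  rw [he] at h2
  simpa using h2

lemma gsio_dedicated {n q : ℕ} (A : Finset (Fin n × Fin n)) (B : Finset (Fin n × Fin q))
    (C : Finset (Fin n × Fin n)) (h : IsGSIO A B C) :
    IsGSIO A B ((C.image Prod.snd).image fun j => (j, j)) := by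
  classical
  obtain ⟨p, hp0, hp⟩ := h
  set C' : Finset (Fin n × Fin n) := (C.image Prod.snd).image fun j => (j, j) with hC'
  obtain ⟨c₀, hc₀⟩ := exists_subst_ne_zero p hp0
  set g := MvPolynomial.aeval (Sum.elim MvPolynomial.X c₀) p with hg
  refine ⟨(MvPolynomial.rename Sum.inl g) * ∏ e : {e // e ∈ C'}, MvPolynomial.X (Sum.inr e), ?_, ?_⟩
  · apply mul_ne_zero
    · exact fun hz => hc₀ (MvPolynomial.rename_injective _ Sum.inl_injective (by simpa using hz))
    · rw [Finset.prod_ne_zero_iff]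
      exact fun e _ => MvPolynomial.X_ne_zero _
  · intro v' hv' s
    rw [map_mul] at hv'
    have hg' : MvPolynomial.eval v' (MvPolynomial.rename Sum.inl g) ≠ 0 :=
      left_ne_zero_of_mul hv'
    have hd : ∀ e : {e // e ∈ C'}, v' (Sum.inr e) ≠ 0 := by
      have := right_ne_zero_of_mul hv'
      rw [map_prod, Finset.prod_ne_zero_iff] at this
      intro e; simpa using this e (Finset.mem_univ e)
    rw [MvPolynomial.eval_rename] at hg'
    set w : ({e // e ∈ A} ⊕ {e // e ∈ B}) → ℂ := v' ∘ Sum.inl with hw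
    set v : (({e // e ∈ A} ⊕ {e // e ∈ B}) ⊕ {e // e ∈ C}) → ℂ :=
      Sum.elim w (fun e => MvPolynomial.eval w (c₀ e)) with hv
    have hvp : MvPolynomial.eval v p ≠ 0 := by
      rw [hg, aux_eval_aeval] at hg'
      have hfe : (fun x => MvPolynomial.eval w (Sum.elim MvPolynomial.X c₀ x)) = v := by
        funext x; cases x <;> simp [hv]
      rwa [hfe] at hg'
    have hrank := hp v hvp s
    have hcard : n + q = Fintype.card (Fin n ⊕ Fin q) := by simp
    rw [hcard, rank_eq_card_iff] at hrank ⊢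
    intro x hx
    set x₁ : Fin n → ℂ := x ∘ Sum.inl with hx₁
    set x₂ : Fin q → ℂ := x ∘ Sum.inr with hx₂
    have hxe : x = Sum.elim x₁ x₂ := by funext i; cases i <;> rfl
    rw [hxe, Matrix.fromBlocks_mulVec, Sum.elim_comp_inl, Sum.elim_comp_inr] at hx
    set dd : {e // e ∈ C'} → ℂ := fun e => v' (Sum.inr e) with hdd
    -- x₁ vanishes on the column support of C
    have hx1 : ∀ j : Fin n, j ∈ C.image Prod.snd → x₁ j = 0 := by
      intro j hj
      have hjj : (j, j) ∈ C' := Finset.mem_image_of_mem _ hj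
      have hbot : (Pattern.realize C' dd).mulVec x₁ j = 0 := by
        have := congrFun hx (Sum.inr j)
        simpa using this
      have hsum : (Pattern.realize C' dd).mulVec x₁ j = dd ⟨(j, j), hjj⟩ * x₁ j := by
        have hdef : (Pattern.realize C' dd).mulVec x₁ j
            = ∑ k, Pattern.realize C' dd j k * x₁ k := rfl
        rw [hdef, Finset.sum_eq_single j]
        · simp [Pattern.realize, hjj]
        · intro k _ hk
          have hnot : (j, k) ∉ C' := by
            intro hmem
            obtain ⟨j', _, hjk⟩ := Finset.mem_image.mp hmem
            rw [Prod.mk.injEq] at hjk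
            exact hk (hjk.2.symm.trans hjk.1)
          simp [Pattern.realize, hnot]
        · exact fun hju => absurd (Finset.mem_univ j) hju
      rw [hbot] at hsum
      rcases mul_eq_zero.mp hsum.symm with h1 | h1
      · exact absurd h1 (hd _)
      · exact h1
    -- hence the realization of C kills x₁
    have hCk : (Pattern.realize C fun e => v (Sum.inr e)).mulVec x₁ = 0 := by
      funext i
      have hdef : (Pattern.realize C fun e => v (Sum.inr e)).mulVec x₁ i
          = ∑ k, (Pattern.realize C fun e => v (Sum.inr e)) i k * x₁ k := rfl
      rw [hdef, Pi.zero_apply]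
      apply Finset.sum_eq_zero
      intro k _
      by_cases hik : (i, k) ∈ C
      · rw [hx1 k (Finset.mem_image_of_mem _ hik), mul_zero]
      · simp [Pattern.realize, hik]
    have hzero : (Matrix.fromBlocks
        (Pattern.realize A (fun e => v (Sum.inl (Sum.inl e))) -
          s • (1 : Matrix (Fin n) (Fin n) ℂ))
        (Pattern.realize B (fun e => v (Sum.inl (Sum.inr e))))
        (Pattern.realize C (fun e => v (Sum.inr e))) 0).mulVec (Sum.elim x₁ x₂) = 0 := by
      rw [Matrix.fromBlocks_mulVec, Sum.elim_comp_inl, Sum.elim_comp_inr]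
      funext i
      cases i with
      | inl i =>
        have := congrFun hx (Sum.inl i)
        simpa [hv, hw] using this
      | inr i =>
        simp [hCk]
    rw [hxe]
    exact hrank _ hzero

/-- Problems 𝒫 (dedicated sensors: every row of `C` has at most one free entry) and 𝒫′
(arbitrary output patterns) have the same optimal value, provided the input pattern `B`
has generic full column rank `q`. -/
theorem dedicated_and_sparsest_GSIO_same_optimum (n q : ℕ)
    (A : Finset (Fin n × Fin n)) (B : Finset (Fin n × Fin q))
    (hB : ∃ Bm : Matrix (Fin n) (Fin q) ℂ,
      (∀ i j, (i, j) ∉ B → Bm i j = 0) ∧ Bm.rank = q) :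
    sInf {k : ℕ | ∃ C : Finset (Fin n × Fin n), C.card = k ∧
        (∀ i : Fin n, (C.filter fun e => e.1 = i).card ≤ 1) ∧ IsGSIO A B C} =
    sInf {k : ℕ | ∃ C : Finset (Fin n × Fin n), C.card = k ∧ IsGSIO A B C} := by
  classical
  set Sd := {k : ℕ | ∃ C : Finset (Fin n × Fin n), C.card = k ∧
      (∀ i : Fin n, (C.filter fun e => e.1 = i).card ≤ 1) ∧ IsGSIO A B C} with hSd
  set Sg := {k : ℕ | ∃ C : Finset (Fin n × Fin n), C.card = k ∧ IsGSIO A B C} with hSg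
  have hsub : Sd ⊆ Sg := by
    rintro k ⟨C, h1, _, h3⟩
    exact ⟨C, h1, h3⟩
  have key : ∀ k ∈ Sg, ∃ k' ∈ Sd, k' ≤ k := by
    rintro k ⟨C, rfl, hC⟩
    set C' : Finset (Fin n × Fin n) := (C.image Prod.snd).image fun j => (j, j) with hC'
    refine ⟨C'.card, ⟨C', rfl, ?_, gsio_dedicated A B C hC⟩, ?_⟩
    · intro i
      have : (C'.filter fun e => e.1 = i) ⊆ {(i, i)} := by
        intro e he
        rw [Finset.mem_filter] at he
        obtain ⟨he1, he2⟩ := he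
        obtain ⟨j', _, hjk⟩ := Finset.mem_image.mp he1
        rw [Finset.mem_singleton]
        rw [← hjk] at he2 ⊢
        simp only at he2
        rw [he2]
      calc (C'.filter fun e => e.1 = i).card ≤ ({(i, i)} : Finset _).card :=
            Finset.card_le_card this
        _ = 1 := Finset.card_singleton _
    · exact le_trans (Finset.card_image_le) (Finset.card_image_le)
  rcases Set.eq_empty_or_nonempty Sg with hg | hg
  · have hd : Sd = ∅ := Set.subset_empty_iff.mp (hg ▸ hsub)
    rw [hd, hg]
  · have hkg := Nat.sInf_mem hg
    obtain ⟨k', hk'd, hk'le⟩ := key _ hkg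
    apply le_antisymm
    · exact le_trans (Nat.sInf_le hk'd) hk'le
    · exact Nat.sInf_le (hsub (Nat.sInf_mem ⟨k', hk'd⟩))
end

section
/- Let A ∈ {0,*}^{n×n} and let B ∈ {0,*}^{n×q} be a dedicated input pattern. Let H(Â) be the minimum number of dedicated sensors making the auxiliary pattern Â structurally observable. Then the minimum number of dedicated sensors C (rows each with exactly one free entry, measuring states) such that (A,B,C) is GSIO lies in the integer interval [H(Â), H(Â)+q]. -/
/-- The structured pair `(M, C)` is structurally observable: there is a nonzero
polynomial in the free entries such that every realization at which it does not vanish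
has `[M̃ - s I; C̃]` of full column rank for every `s ∈ ℂ`. -/
def IsStructObs {ι : Type*} [Fintype ι] [DecidableEq ι] {m : ℕ}
    (M : Finset (ι × ι)) (C : Finset (Fin m × ι)) : Prop :=
  ∃ p : MvPolynomial ({e // e ∈ M} ⊕ {e // e ∈ C}) ℂ, p ≠ 0 ∧
    ∀ v : ({e // e ∈ M} ⊕ {e // e ∈ C}) → ℂ,
      MvPolynomial.eval v p ≠ 0 → ∀ s : ℂ,
        (Matrix.fromRows
            (Pattern.realize M (fun e => v (Sum.inl e)) - s • (1 : Matrix ι ι ℂ))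
            (Pattern.realize C (fun e => v (Sum.inr e)))).rank = Fintype.card ι

/-- `Hmin M` is the minimum number of dedicated sensors (rows each having exactly one
free entry) in an output pattern `C` making the pair `(M, C)` structurally observable. -/
noncomputable def Hmin {ι : Type*} [Fintype ι] [DecidableEq ι] (M : Finset (ι × ι)) : ℕ :=
  sInf {k : ℕ | ∃ C : Finset (Fin k × ι),
    (∀ i : Fin k, ∃! j : ι, (i, j) ∈ C) ∧ IsStructObs M C}

/-- The auxiliary pattern `Â = [[A', B], [0, 0]]` on the index type `Fin n ⊕ Fin q`
(states together with inputs viewed as extra state vertices), where `A'` equals `A`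
except that every row of `A` indexed by the set `I` of input-driven states is set to
zero. -/
def auxPattern {n q : ℕ} (A : Finset (Fin n × Fin n)) (B : Finset (Fin n × Fin q))
    (I : Finset (Fin n)) : Finset ((Fin n ⊕ Fin q) × (Fin n ⊕ Fin q)) :=
  ((A.filter fun e => e.1 ∉ I).image fun e => (Sum.inl e.1, Sum.inl e.2)) ∪
    (B.image fun e => (Sum.inl e.1, Sum.inr e.2))

open MvPolynomial Matrix

lemma rank_eq_card_iff_ker {m α : Type*} [Fintype m] [Fintype α] [DecidableEq α]
    (M : Matrix m α ℂ) :
    M.rank = Fintype.card α ↔ ∀ x : α → ℂ, M.mulVec x = 0 → x = 0 := by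
  have hfd : FiniteDimensional ℂ (α → ℂ) := inferInstance
  have h1 := LinearMap.finrank_range_add_finrank_ker M.mulVecLin
  rw [Module.finrank_fintype_fun_eq_card] at h1
  rw [Matrix.rank]
  constructor
  · intro h x hx
    have hk : Module.finrank ℂ (LinearMap.ker M.mulVecLin) = 0 := by omega
    have : LinearMap.ker M.mulVecLin = ⊥ := Submodule.finrank_eq_zero.mp hk
    have hx' : x ∈ LinearMap.ker M.mulVecLin := by
      simpa [Matrix.mulVecLin] using hx
    simpa [this] using hx'
  · intro h
    have : LinearMap.ker M.mulVecLin = ⊥ := by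
      rw [LinearMap.ker_eq_bot']
      intro x hx
      exact h x (by simpa [Matrix.mulVecLin] using hx)
    rw [this, finrank_bot] at h1
    omega

lemma exists_eval_ne {σ : Type*} (p : MvPolynomial σ ℂ) (hp : p ≠ 0) :
    ∃ v : σ → ℂ, MvPolynomial.eval v p ≠ 0 := by
  by_contra h
  push_neg at h
  exact hp (MvPolynomial.funext fun x => by simpa using h x)

lemma exists_pullback {σ τ : Type*} (ι : τ → σ) (hι : Function.Injective ι)
    (p : MvPolynomial σ ℂ) (hp : p ≠ 0) :
    ∃ (p' : MvPolynomial τ ℂ) (c : σ → ℂ), p' ≠ 0 ∧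
      ∀ w : τ → ℂ, MvPolynomial.eval w p' = MvPolynomial.eval (Function.extend ι w c) p := by
  obtain ⟨v0, hv0⟩ := exists_eval_ne p hp
  set g : σ → MvPolynomial τ ℂ :=
    Function.extend ι (fun t => (X t : MvPolynomial τ ℂ)) (fun s => MvPolynomial.C (v0 s)) with hg
  have heval : ∀ w : τ → ℂ, MvPolynomial.eval w (eval₂ MvPolynomial.C g p) =
      MvPolynomial.eval (Function.extend ι w v0) p := by
    intro w
    rw [eval_eval₂]
    have h1 : (MvPolynomial.eval w).comp (MvPolynomial.C (σ := τ)) = RingHom.id ℂ := by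
      ext a; simp
    have h2 : (fun s => MvPolynomial.eval w (g s)) = Function.extend ι w v0 := by
      funext s
      by_cases h : ∃ t, ι t = s
      · obtain ⟨t, rfl⟩ := h
        rw [hg, hι.extend_apply, hι.extend_apply]
        simp
      · rw [hg, Function.extend_apply' _ _ _ h, Function.extend_apply' _ _ _ h]
        simp
    rw [h1, h2, eval₂_id]
  refine ⟨eval₂ MvPolynomial.C g p, v0, ?_, heval⟩
  intro h0
  apply hv0
  have := heval (v0 ∘ ι)
  rw [h0] at this
  have hext : Function.extend ι (v0 ∘ ι) v0 = v0 := by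
    funext s
    by_cases h : ∃ t, ι t = s
    · obtain ⟨t, rfl⟩ := h
      rw [hι.extend_apply]; rfl
    · rw [Function.extend_apply' _ _ _ h]
  rw [hext] at this
  simpa using this.symm

lemma mulVec_realize_row_single {a b : Type*} [Fintype b] [DecidableEq a] [DecidableEq b]
    (P : Finset (a × b)) (v : {e // e ∈ P} → ℂ) (x : b → ℂ) (i : a) (j : b)
    (hm : (i, j) ∈ P) (hu : ∀ j', (i, j') ∈ P → j' = j) :
    (Pattern.realize P v *ᵥ x) i = v ⟨(i, j), hm⟩ * x j := by
  rw [Matrix.mulVec, dotProduct]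
  rw [Finset.sum_eq_single j]
  · simp [Pattern.realize, hm]
  · intro b _ hbj
    have : (i, b) ∉ P := fun h => hbj (hu b h)
    simp [Pattern.realize, this]
  · simp

lemma mulVec_realize_row_zero {a b : Type*} [Fintype b] [DecidableEq a] [DecidableEq b]
    (P : Finset (a × b)) (v : {e // e ∈ P} → ℂ) (x : b → ℂ) (i : a)
    (h : ∀ j', (i, j') ∉ P) :
    (Pattern.realize P v *ᵥ x) i = 0 := by
  rw [Matrix.mulVec, dotProduct]
  apply Finset.sum_eq_zero
  intro b _
  simp [Pattern.realize, h b]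

lemma realize_apply {a b : Type*} [DecidableEq a] [DecidableEq b] (P : Finset (a × b))
    (v : {e // e ∈ P} → ℂ) (i : a) (j : b) :
    Pattern.realize P v i j = if h : (i, j) ∈ P then v ⟨(i, j), h⟩ else 0 := rfl

lemma mulVec_congr_row {a b : Type*} [Fintype b] (M N : Matrix a b ℂ) (x : b → ℂ) (i : a)
    (h : ∀ j, M i j = N i j) : (M *ᵥ x) i = (N *ᵥ x) i := by
  simp only [Matrix.mulVec, dotProduct]
  exact Finset.sum_congr rfl fun j _ => by rw [h j]


section Aux

variable {n q : ℕ} {A : Finset (Fin n × Fin n)} {B : Finset (Fin n × Fin q)}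
  {I : Finset (Fin n)}

lemma aux_mem_ll {i j : Fin n} :
    (Sum.inl i, Sum.inl j) ∈ auxPattern A B I ↔ (i, j) ∈ A ∧ i ∉ I := by
  simp [auxPattern, Prod.ext_iff]

lemma aux_mem_lr {i : Fin n} {j : Fin q} :
    ((Sum.inl i : Fin n ⊕ Fin q), Sum.inr j) ∈ auxPattern A B I ↔ (i, j) ∈ B := by
  simp [auxPattern, Prod.ext_iff]

lemma aux_mem_r {i : Fin q} {y : Fin n ⊕ Fin q} :
    ((Sum.inr i : Fin n ⊕ Fin q), y) ∉ auxPattern A B I := by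
  simp [auxPattern, Prod.ext_iff]

lemma realize_aux_ll (w : {e // e ∈ auxPattern A B I} → ℂ) (i j : Fin n) :
    Pattern.realize (auxPattern A B I) w (Sum.inl i) (Sum.inl j) =
      if h : (i, j) ∈ A ∧ i ∉ I then w ⟨(Sum.inl i, Sum.inl j), aux_mem_ll.2 h⟩ else 0 := by
  by_cases h : (i, j) ∈ A ∧ i ∉ I
  · rw [dif_pos h]
    simp only [Pattern.realize, Matrix.of_apply]
    rw [dif_pos (aux_mem_ll.2 h)]
  · rw [dif_neg h]
    simp only [Pattern.realize, Matrix.of_apply]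
    rw [dif_neg (fun hm => h (aux_mem_ll.1 hm))]

lemma realize_aux_lr (w : {e // e ∈ auxPattern A B I} → ℂ) (i : Fin n) (j : Fin q) :
    Pattern.realize (auxPattern A B I) w (Sum.inl i) (Sum.inr j) =
      if h : (i, j) ∈ B then w ⟨(Sum.inl i, Sum.inr j), aux_mem_lr.2 h⟩ else 0 := by
  by_cases h : (i, j) ∈ B
  · rw [dif_pos h]
    simp only [Pattern.realize, Matrix.of_apply]
    rw [dif_pos (aux_mem_lr.2 h)]
  · rw [dif_neg h]
    simp only [Pattern.realize, Matrix.of_apply]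
    rw [dif_neg (fun hm => h (aux_mem_lr.1 hm))]

lemma realize_aux_r (w : {e // e ∈ auxPattern A B I} → ℂ) (i : Fin q) (y : Fin n ⊕ Fin q) :
    Pattern.realize (auxPattern A B I) w (Sum.inr i) y = 0 := by
  simp only [Pattern.realize, Matrix.of_apply]
  rw [dif_neg aux_mem_r]

lemma realize_aux_eq (w : {e // e ∈ auxPattern A B I} → ℂ) :
    Pattern.realize (auxPattern A B I) w = Matrix.fromBlocks
      (Pattern.realize (A.filter fun e => e.1 ∉ I) (fun e =>
        w ⟨(Sum.inl e.1.1, Sum.inl e.1.2),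
          aux_mem_ll.2 ⟨(Finset.mem_filter.1 e.2).1, (Finset.mem_filter.1 e.2).2⟩⟩))
      (Pattern.realize B (fun e => w ⟨(Sum.inl e.1.1, Sum.inr e.1.2), aux_mem_lr.2 e.2⟩))
      0 0 := by
  ext i j
  cases i with
  | inl i =>
    cases j with
    | inl j =>
      rw [Matrix.fromBlocks_apply₁₁, realize_aux_ll, realize_apply]
      by_cases h : (i, j) ∈ A ∧ i ∉ I
      · rw [dif_pos h, dif_pos (Finset.mem_filter.2 h)]
      · rw [dif_neg h, dif_neg (fun hm => h ⟨(Finset.mem_filter.1 hm).1, (Finset.mem_filter.1 hm).2⟩)]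
    | inr j =>
      rw [Matrix.fromBlocks_apply₁₂, realize_aux_lr, realize_apply]
  | inr i =>
    cases j with
    | inl j => rw [Matrix.fromBlocks_apply₂₁, realize_aux_r]; rfl
    | inr j => rw [Matrix.fromBlocks_apply₂₂, realize_aux_r]; rfl


def auxVarMap : {e // e ∈ auxPattern A B I} → ({e // e ∈ A} ⊕ {e // e ∈ B})
  | ⟨(Sum.inl i, Sum.inl j), h⟩ => Sum.inl ⟨(i, j), (aux_mem_ll.1 h).1⟩
  | ⟨(Sum.inl i, Sum.inr j), h⟩ => Sum.inr ⟨(i, j), aux_mem_lr.1 h⟩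
  | ⟨(Sum.inr _, _), h⟩ => absurd h aux_mem_r

@[simp] lemma auxVarMap_ll {i j : Fin n} (h : (Sum.inl i, Sum.inl j) ∈ auxPattern A B I) :
    auxVarMap ⟨(Sum.inl i, Sum.inl j), h⟩ = Sum.inl ⟨(i, j), (aux_mem_ll.1 h).1⟩ := rfl

@[simp] lemma auxVarMap_lr {i : Fin n} {j : Fin q}
    (h : ((Sum.inl i : Fin n ⊕ Fin q), Sum.inr j) ∈ auxPattern A B I) :
    auxVarMap ⟨(Sum.inl i, Sum.inr j), h⟩ = Sum.inr ⟨(i, j), aux_mem_lr.1 h⟩ := rfl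

lemma auxVarMap_injective : Function.Injective (auxVarMap (A := A) (B := B) (I := I)) := by
  rintro ⟨⟨x, y⟩, h⟩ ⟨⟨x', y'⟩, h'⟩ heq
  rcases x with i | i
  · rcases y with j | j
    · rcases x' with i' | i'
      · rcases y' with j' | j'
        · simp only [auxVarMap_ll] at heq
          injection heq with heq
          have h2 := congrArg Subtype.val heq
          cases h2
          rfl
        · simp only [auxVarMap_ll, auxVarMap_lr] at heq
          exact absurd heq (by simp)
      · exact absurd h' aux_mem_r
    · rcases x' with i' | i'
      · rcases y' with j' | j'
        · simp only [auxVarMap_ll, auxVarMap_lr] at heq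
          exact absurd heq (by simp)
        · simp only [auxVarMap_lr] at heq
          injection heq with heq
          have h2 := congrArg Subtype.val heq
          cases h2
          rfl
      · exact absurd h' aux_mem_r
  · exact absurd h aux_mem_r

end Aux

section Main

variable {n q : ℕ} {A : Finset (Fin n × Fin n)} {B : Finset (Fin n × Fin q)}
  {f : Fin q → Fin n}

lemma mulVec_realizeB (hf : Function.Injective f)
    (hB : ∀ (i : Fin n) (j : Fin q), (i, j) ∈ B ↔ i = f j)
    (v : {e // e ∈ B} → ℂ) (u : Fin q → ℂ) (j : Fin q) :
    (Pattern.realize B v *ᵥ u) (f j) = v ⟨(f j, j), (hB _ _).2 rfl⟩ * u j := by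
  apply mulVec_realize_row_single
  intro j' hj'
  exact hf ((hB _ _).1 hj').symm

lemma mulVec_realizeB_zero
    (hB : ∀ (i : Fin n) (j : Fin q), (i, j) ∈ B ↔ i = f j)
    (v : {e // e ∈ B} → ℂ) (u : Fin q → ℂ) (i : Fin n)
    (hi : i ∉ Finset.image f Finset.univ) :
    (Pattern.realize B v *ᵥ u) i = 0 := by
  apply mulVec_realize_row_zero
  intro j' hj'
  exact hi (Finset.mem_image.2 ⟨j', Finset.mem_univ _, ((hB _ _).1 hj').symm⟩)

lemma base_GSIO (hf : Function.Injective f)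
    (hB : ∀ (i : Fin n) (j : Fin q), (i, j) ∈ B ↔ i = f j) :
    ∃ C : Finset (Fin n × Fin n), (∀ i : Fin n, ∃! j : Fin n, (i, j) ∈ C) ∧ IsGSIO A B C := by
  classical
  set C₀ : Finset (Fin n × Fin n) := Finset.univ.image fun j : Fin n => (j, j) with hC₀
  have memC : ∀ i j : Fin n, (i, j) ∈ C₀ ↔ j = i := by
    intro i j
    simp [hC₀, Prod.ext_iff, eq_comm, and_comm]
  refine ⟨C₀, fun i => ⟨i, (memC i i).2 rfl, fun j hj => (memC i j).1 hj⟩, ?_⟩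
  refine ⟨(∏ j : Fin q, X (Sum.inl (Sum.inr (⟨(f j, j), (hB _ _).2 rfl⟩ : {e // e ∈ B})))) *
      ∏ e : {e // e ∈ C₀}, X (Sum.inr e), ?_, ?_⟩
  · apply mul_ne_zero <;>
    · apply Finset.prod_ne_zero_iff.2
      intro e _
      exact MvPolynomial.X_ne_zero _
  · intro v hv s
    rw [show n + q = Fintype.card (Fin n ⊕ Fin q) by simp, rank_eq_card_iff_ker]
    intro z hz
    rw [_root_.map_mul] at hv
    obtain ⟨hv1, hv2⟩ := mul_ne_zero_iff.1 hv
    rw [map_prod] at hv1 hv2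
    have hb : ∀ j : Fin q, v (Sum.inl (Sum.inr ⟨(f j, j), (hB _ _).2 rfl⟩)) ≠ 0 := by
      intro j
      have := Finset.prod_ne_zero_iff.1 hv1 j (Finset.mem_univ _)
      simpa using this
    have hc : ∀ e : {e // e ∈ C₀}, v (Sum.inr e) ≠ 0 := by
      intro e
      have := Finset.prod_ne_zero_iff.1 hv2 e (Finset.mem_univ _)
      simpa using this
    have hzeq : z = Sum.elim (z ∘ Sum.inl) (z ∘ Sum.inr) := by
      funext w; cases w <;> rfl
    rw [hzeq, Matrix.fromBlocks_mulVec] at hz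
    set x := z ∘ Sum.inl with hx
    set u := z ∘ Sum.inr with hu
    have h1 : ∀ i : Fin n,
        (((Pattern.realize A fun e => v (Sum.inl (Sum.inl e))) - s • 1) *ᵥ x) i +
          ((Pattern.realize B fun e => v (Sum.inl (Sum.inr e))) *ᵥ u) i = 0 := by
      intro i
      have := congrFun hz (Sum.inl i)
      simpa using this
    have h2 : ∀ i : Fin n,
        ((Pattern.realize C₀ fun e => v (Sum.inr e)) *ᵥ x) i = 0 := by
      intro i
      have := congrFun hz (Sum.inr i)
      simpa using this
    have hx0 : x = 0 := by
      funext i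
      have := h2 i
      rw [mulVec_realize_row_single C₀ _ x i i ((memC i i).2 rfl)
        (fun j' hj' => (memC i j').1 hj')] at this
      have := mul_eq_zero.1 this
      rcases this with h | h
      · exact absurd h (hc _)
      · exact h
    have hu0 : u = 0 := by
      funext j
      have := h1 (f j)
      rw [hx0] at this
      rw [Matrix.mulVec_zero] at this
      rw [mulVec_realizeB hf hB _ u j] at this
      simp only [Pi.zero_apply, zero_add] at this
      rcases mul_eq_zero.1 this with h | h
      · exact absurd h (hb _)
      · exact h
    funext w
    cases w
    · exact congrFun hx0 _
    · exact congrFun hu0 _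

end Main

section Claim1

variable {n q k : ℕ} {A : Finset (Fin n × Fin n)} {B : Finset (Fin n × Fin q)}
  {f : Fin q → Fin n} {C : Finset (Fin k × Fin n)}

def liftC (q : ℕ) (C : Finset (Fin k × Fin n)) : Finset (Fin k × (Fin n ⊕ Fin q)) :=
  C.image fun e => (e.1, Sum.inl e.2)

lemma mem_liftC_inl {i : Fin k} {j : Fin n} :
    (i, Sum.inl j) ∈ liftC q C ↔ (i, j) ∈ C := by
  simp [liftC, Prod.ext_iff]

lemma mem_liftC_inr {i : Fin k} {j : Fin q} : (i, Sum.inr j) ∉ liftC q C := by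
  simp [liftC, Prod.ext_iff]

def liftCVar : {e // e ∈ liftC q C} → {e // e ∈ C}
  | ⟨(i, Sum.inl j), h⟩ => ⟨(i, j), mem_liftC_inl.1 h⟩
  | ⟨(i, Sum.inr _), h⟩ => absurd h mem_liftC_inr

lemma liftCVar_injective : Function.Injective (liftCVar (q := q) (C := C)) := by
  rintro ⟨⟨i, y⟩, h⟩ ⟨⟨i', y'⟩, h'⟩ heq
  rcases y with j | j
  · rcases y' with j' | j'
    · simp only [liftCVar] at heq
      have h2 := congrArg Subtype.val heq
      cases h2
      rfl
    · exact absurd h' mem_liftC_inr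
  · exact absurd h mem_liftC_inr

lemma obs_of_GSIO (hf : Function.Injective f)
    (hB : ∀ (i : Fin n) (j : Fin q), (i, j) ∈ B ↔ i = f j)
    (hC : ∀ i : Fin k, ∃! j : Fin n, (i, j) ∈ C) (hG : IsGSIO A B C) :
    ∃ C' : Finset (Fin k × (Fin n ⊕ Fin q)),
      (∀ i : Fin k, ∃! y : Fin n ⊕ Fin q, (i, y) ∈ C') ∧
      IsStructObs (auxPattern A B (Finset.image f Finset.univ)) C' := by
  classical
  set I : Finset (Fin n) := Finset.image f Finset.univ with hI
  refine ⟨liftC q C, ?_, ?_⟩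
  · intro i
    obtain ⟨j, hj, hju⟩ := hC i
    refine ⟨Sum.inl j, mem_liftC_inl.2 hj, ?_⟩
    rintro (j' | j') hj'
    · rw [hju j' (mem_liftC_inl.1 hj')]
    · exact absurd hj' mem_liftC_inr
  obtain ⟨p, hp0, hp⟩ := hG
  set ι : ({e // e ∈ auxPattern A B I} ⊕ {e // e ∈ liftC q C}) →
      (({e // e ∈ A} ⊕ {e // e ∈ B}) ⊕ {e // e ∈ C}) :=
    Sum.elim (Sum.inl ∘ auxVarMap) (Sum.inr ∘ liftCVar) with hιdef
  have hι : Function.Injective ι :=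
    Function.Injective.sumElim
      (Sum.inl_injective.comp auxVarMap_injective)
      (Sum.inr_injective.comp liftCVar_injective)
      (fun a b => by simp [hιdef])
  obtain ⟨p₀, c, hp₀ne, heval⟩ := exists_pullback ι hι p hp0
  refine ⟨p₀ * ∏ j : Fin q, X (Sum.inl
      (⟨(Sum.inl (f j), Sum.inr j), aux_mem_lr.2 ((hB _ _).2 rfl)⟩ :
        {e // e ∈ auxPattern A B I})), ?_, ?_⟩
  · exact mul_ne_zero hp₀ne (Finset.prod_ne_zero_iff.2 fun e _ => MvPolynomial.X_ne_zero _)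
  intro w hw s
  rw [_root_.map_mul] at hw
  obtain ⟨hw1, hw2⟩ := mul_ne_zero_iff.1 hw
  rw [map_prod] at hw2
  have hwb : ∀ j : Fin q,
      w (Sum.inl ⟨(Sum.inl (f j), Sum.inr j), aux_mem_lr.2 ((hB _ _).2 rfl)⟩) ≠ 0 := by
    intro j
    have := Finset.prod_ne_zero_iff.1 hw2 j (Finset.mem_univ _)
    simpa using this
  set v : (({e // e ∈ A} ⊕ {e // e ∈ B}) ⊕ {e // e ∈ C}) → ℂ := Function.extend ι w c with hv
  have hveval : MvPolynomial.eval v p ≠ 0 := by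
    rw [hv, ← heval w]; exact hw1
  -- value correspondences
  have VA : ∀ (i j : Fin n) (h : (i, j) ∈ A) (hi : i ∉ I),
      v (Sum.inl (Sum.inl ⟨(i, j), h⟩)) =
        w (Sum.inl ⟨(Sum.inl i, Sum.inl j), aux_mem_ll.2 ⟨h, hi⟩⟩) := by
    intro i j h hi
    exact hι.extend_apply w c (Sum.inl ⟨(Sum.inl i, Sum.inl j), aux_mem_ll.2 ⟨h, hi⟩⟩)
  have VB : ∀ j : Fin q,
      v (Sum.inl (Sum.inr ⟨(f j, j), (hB _ _).2 rfl⟩)) =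
        w (Sum.inl ⟨(Sum.inl (f j), Sum.inr j), aux_mem_lr.2 ((hB _ _).2 rfl)⟩) := by
    intro j
    exact hι.extend_apply w c (Sum.inl ⟨(Sum.inl (f j), Sum.inr j), aux_mem_lr.2 ((hB _ _).2 rfl)⟩)
  have VC : ∀ (i : Fin k) (j : Fin n) (h : (i, j) ∈ C),
      v (Sum.inr ⟨(i, j), h⟩) = w (Sum.inr ⟨(i, Sum.inl j), mem_liftC_inl.2 h⟩) := by
    intro i j h
    exact hι.extend_apply w c (Sum.inr ⟨(i, Sum.inl j), mem_liftC_inl.2 h⟩)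
  rw [rank_eq_card_iff_ker]
  intro z hz
  set x : Fin n → ℂ := z ∘ Sum.inl with hx
  set u : Fin q → ℂ := z ∘ Sum.inr with hu
  have hzeq : z = Sum.elim x u := by funext yy; cases yy <;> rfl
  rw [Matrix.fromRows_mulVec] at hz
  set vA : {e // e ∈ A} → ℂ := fun e => v (Sum.inl (Sum.inl e)) with hvA
  set vB : {e // e ∈ B} → ℂ := fun e => v (Sum.inl (Sum.inr e)) with hvB
  set vC : {e // e ∈ C} → ℂ := fun e => v (Sum.inr e) with hvC
  have E1 : ∀ i : Fin n,
      (((Pattern.realize (A.filter fun e => e.1 ∉ I) (fun e =>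
          w (Sum.inl ⟨(Sum.inl e.1.1, Sum.inl e.1.2),
            aux_mem_ll.2 ⟨(Finset.mem_filter.1 e.2).1, (Finset.mem_filter.1 e.2).2⟩⟩))) *ᵥ x) i +
        ((Pattern.realize B (fun e =>
          w (Sum.inl ⟨(Sum.inl e.1.1, Sum.inr e.1.2), aux_mem_lr.2 e.2⟩))) *ᵥ u) i) - s * x i = 0 := by
    intro i
    have h := congrFun hz (Sum.inl (Sum.inl i))
    rw [Matrix.sub_mulVec, Matrix.smul_mulVec, Matrix.one_mulVec] at h
    rw [realize_aux_eq, hzeq, Matrix.fromBlocks_mulVec] at h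
    simpa using h
  have E2 : ∀ i : Fin k,
      ((Pattern.realize (liftC q C) (fun e => w (Sum.inr e))) *ᵥ z) i = 0 := by
    intro i
    have h := congrFun hz (Sum.inr i)
    simpa using h
  -- the C-output of x vanishes
  have hCx : ∀ i : Fin k, ((Pattern.realize C vC) *ᵥ x) i = 0 := by
    intro i
    obtain ⟨j, hj, hju⟩ := hC i
    have huniq : ∀ y : Fin n ⊕ Fin q, (i, y) ∈ liftC q C → y = Sum.inl j := by
      rintro (j' | j') hy
      · rw [hju j' (mem_liftC_inl.1 hy)]
      · exact absurd hy mem_liftC_inr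
    have h2 := E2 i
    rw [mulVec_realize_row_single (liftC q C) _ z i (Sum.inl j)
      (mem_liftC_inl.2 hj) huniq] at h2
    rw [mulVec_realize_row_single C vC x i j hj (fun j' hj' => hju j' hj')]
    show v (Sum.inr ⟨(i, j), hj⟩) * z (Sum.inl j) = 0
    rw [VC i j hj]
    exact h2
  -- the candidate kernel vector for the Rosenbrock matrix
  have hb' : ∀ j : Fin q, vB ⟨(f j, j), (hB _ _).2 rfl⟩ ≠ 0 := by
    intro j
    show v (Sum.inl (Sum.inr ⟨(f j, j), (hB _ _).2 rfl⟩)) ≠ 0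
    rw [VB j]
    exact hwb j
  set u' : Fin q → ℂ :=
    fun j => (s * x (f j) - ((Pattern.realize A vA) *ᵥ x) (f j)) /
      vB ⟨(f j, j), (hB _ _).2 rfl⟩ with hu'
  have hrank := hp v hveval s
  rw [show n + q = Fintype.card (Fin n ⊕ Fin q) by simp, rank_eq_card_iff_ker] at hrank
  have hker : Matrix.fromBlocks ((Pattern.realize A vA) - s • 1) (Pattern.realize B vB)
      (Pattern.realize C vC) 0 *ᵥ Sum.elim x u' = 0 := by
    rw [Matrix.fromBlocks_mulVec]
    funext yy
    cases yy with
    | inl i =>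
      simp only [Sum.elim_inl, Sum.elim_comp_inl, Sum.elim_comp_inr, Pi.add_apply, Pi.zero_apply]
      rw [Matrix.sub_mulVec, Matrix.smul_mulVec, Matrix.one_mulVec]
      simp only [Pi.sub_apply, Pi.smul_apply, smul_eq_mul]
      by_cases hi : i ∈ I
      · obtain ⟨j, -, rfl⟩ := Finset.mem_image.1 hi
        rw [mulVec_realizeB hf hB vB u' j]
        simp only [hu']
        rw [mul_div_cancel₀ _ (hb' j)]
        ring
      · have h1 := E1 i
        have hFrow : ((Pattern.realize (A.filter fun e => e.1 ∉ I) (fun e =>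
            w (Sum.inl ⟨(Sum.inl e.1.1, Sum.inl e.1.2),
              aux_mem_ll.2 ⟨(Finset.mem_filter.1 e.2).1, (Finset.mem_filter.1 e.2).2⟩⟩))) *ᵥ x) i =
            ((Pattern.realize A vA) *ᵥ x) i := by
          apply mulVec_congr_row
          intro j
          rw [realize_apply, realize_apply]
          by_cases hA : (i, j) ∈ A
          · rw [dif_pos (Finset.mem_filter.2 ⟨hA, hi⟩), dif_pos hA]
            exact (VA i j hA hi).symm
          · rw [dif_neg (fun hm => hA (Finset.mem_filter.1 hm).1), dif_neg hA]
        have hGrow : ((Pattern.realize B (fun e =>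
            w (Sum.inl ⟨(Sum.inl e.1.1, Sum.inr e.1.2), aux_mem_lr.2 e.2⟩))) *ᵥ u) i = 0 :=
          mulVec_realizeB_zero hB _ u i hi
        rw [hFrow, hGrow, add_zero] at h1
        rw [mulVec_realizeB_zero hB vB u' i hi, add_zero]
        linear_combination h1
    | inr i =>
      simp only [Sum.elim_inr, Sum.elim_comp_inl, Sum.elim_comp_inr, Pi.add_apply,
        Matrix.zero_mulVec, Pi.zero_apply, add_zero]
      exact hCx i
  have hker0 := hrank (Sum.elim x u') hker
  have hx0 : x = 0 := by
    funext i
    exact congrFun hker0 (Sum.inl i)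
  have hu0 : u = 0 := by
    funext j
    have h1 := E1 (f j)
    rw [hx0] at h1
    rw [Matrix.mulVec_zero] at h1
    rw [mulVec_realizeB hf hB _ u j] at h1
    simp only [Pi.zero_apply, zero_add, mul_zero, sub_zero] at h1
    rcases mul_eq_zero.1 h1 with h | h
    · exact absurd h (hwb j)
    · exact h
  funext yy
  cases yy with
  | inl i => exact congrFun hx0 i
  | inr j => exact congrFun hu0 j

end Claim1


section Claim2

variable {n q k : ℕ} {A : Finset (Fin n × Fin n)} {B : Finset (Fin n × Fin q)}
  {f : Fin q → Fin n}

lemma castAdd_ne_natAdd (a : Fin k) (b : Fin q) : Fin.castAdd q a ≠ Fin.natAdd k b := by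
  intro h
  have := congrArg Fin.val h
  rw [Fin.coe_castAdd, Fin.coe_natAdd] at this
  omega

lemma GSIO_of_obs (hf : Function.Injective f)
    (hB : ∀ (i : Fin n) (j : Fin q), (i, j) ∈ B ↔ i = f j)
    (C' : Finset (Fin k × (Fin n ⊕ Fin q)))
    (hC' : ∀ i : Fin k, ∃! y : Fin n ⊕ Fin q, (i, y) ∈ C')
    (hobs : IsStructObs (auxPattern A B (Finset.image f Finset.univ)) C') :
    ∃ C : Finset (Fin (k + q) × Fin n),
      (∀ i : Fin (k + q), ∃! j : Fin n, (i, j) ∈ C) ∧ IsGSIO A B C := by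
  classical
  set I : Finset (Fin n) := Finset.image f Finset.univ with hI
  set C'' : Finset (Fin (k + q) × Fin n) :=
    (C'.image fun e => (Fin.castAdd q e.1, Sum.elim id f e.2)) ∪
      (Finset.univ.image fun j : Fin q => (Fin.natAdd k j, f j)) with hC''def
  -- membership in the first row block
  have memCast : ∀ (i : Fin k) (y : Fin n ⊕ Fin q), (i, y) ∈ C' →
      ((Fin.castAdd q i, Sum.elim id f y) ∈ C'') :=
    fun i y hy => Finset.mem_union_left _ (Finset.mem_image_of_mem _ hy)
  have memNat : ∀ j : Fin q, ((Fin.natAdd k j, f j) ∈ C'') :=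
    fun j => Finset.mem_union_right _ (Finset.mem_image.2 ⟨j, Finset.mem_univ _, rfl⟩)
  have uniqNat : ∀ (j : Fin q) (j' : Fin n), ((Fin.natAdd k j, j') ∈ C'') → j' = f j := by
    intro j j' hm
    rcases Finset.mem_union.1 hm with hm | hm
    · obtain ⟨e, -, he⟩ := Finset.mem_image.1 hm
      exact absurd (congrArg Prod.fst he) (castAdd_ne_natAdd e.1 j)
    · obtain ⟨j'', -, he⟩ := Finset.mem_image.1 hm
      obtain ⟨h1, h2⟩ := Prod.mk.injEq .. ▸ he
      have : j'' = j := by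
        have := congrArg Fin.val h1
        rw [Fin.coe_natAdd, Fin.coe_natAdd] at this
        exact Fin.ext (by omega)
      rw [← h2, this]
  have uniqCast : ∀ (i : Fin k) (y : Fin n ⊕ Fin q), (i, y) ∈ C' →
      (∀ y', (i, y') ∈ C' → y' = y) →
      ∀ j' : Fin n, ((Fin.castAdd q i, j') ∈ C'') → j' = Sum.elim id f y := by
    intro i y hy hyu j' hm
    rcases Finset.mem_union.1 hm with hm | hm
    · obtain ⟨e, he, heq⟩ := Finset.mem_image.1 hm
      obtain ⟨h1, h2⟩ := Prod.mk.injEq .. ▸ heq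
      have hei : e.1 = i := by
        have := congrArg Fin.val h1
        rw [Fin.coe_castAdd, Fin.coe_castAdd] at this
        exact Fin.ext this
      have : e.2 = y := hyu e.2 (by rw [← hei]; exact he)
      rw [← h2, this]
    · obtain ⟨j'', -, he⟩ := Finset.mem_image.1 hm
      exact absurd (congrArg Prod.fst he).symm (castAdd_ne_natAdd i j'')
  refine ⟨C'', ?_, ?_⟩
  · -- dedication
    intro i
    refine Fin.addCases (motive := fun i => ∃! j : Fin n, (i, j) ∈ C'') ?_ ?_ i
    · intro i₀
      obtain ⟨y, hy, hyu⟩ := hC' i₀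
      exact ⟨Sum.elim id f y, memCast i₀ y hy, fun j' hj' => uniqCast i₀ y hy hyu j' hj'⟩
    · intro j₀
      exact ⟨f j₀, memNat j₀, fun j' hj' => uniqNat j₀ j' hj'⟩
  -- GSIO
  obtain ⟨p', hp'0, hp'⟩ := hobs
  set cvMap : {e // e ∈ C'} → {e // e ∈ C''} :=
    fun e => ⟨(Fin.castAdd q e.1.1, Sum.elim id f e.1.2), memCast e.1.1 e.1.2 e.2⟩
    with hcvMap
  have hcv : Function.Injective cvMap := by
    rintro ⟨⟨i, y⟩, h⟩ ⟨⟨i', y'⟩, h'⟩ heq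
    have h2 := congrArg Subtype.val heq
    obtain ⟨h3, h4⟩ := Prod.mk.injEq .. ▸ h2
    have hii : i = i' := by
      have := congrArg Fin.val h3
      rw [Fin.coe_castAdd, Fin.coe_castAdd] at this
      exact Fin.ext this
    subst hii
    obtain ⟨yy, -, hyu⟩ := hC' i
    have : y = y' := by rw [hyu y h, hyu y' h']
    subst this
    rfl
  set ι : ({e // e ∈ auxPattern A B I} ⊕ {e // e ∈ C'}) →
      (({e // e ∈ A} ⊕ {e // e ∈ B}) ⊕ {e // e ∈ C''}) :=
    Sum.elim (Sum.inl ∘ auxVarMap) (Sum.inr ∘ cvMap) with hιdef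
  have hι : Function.Injective ι :=
    Function.Injective.sumElim
      (Sum.inl_injective.comp auxVarMap_injective)
      (Sum.inr_injective.comp hcv)
      (fun a b => by simp [hιdef])
  refine ⟨MvPolynomial.rename ι p' *
      (∏ j : Fin q, X (Sum.inl (Sum.inr (⟨(f j, j), (hB _ _).2 rfl⟩ : {e // e ∈ B})))) *
      ∏ e : {e // e ∈ C''}, X (Sum.inr e), ?_, ?_⟩
  · refine mul_ne_zero (mul_ne_zero ?_ ?_) ?_
    · intro h
      exact hp'0 (MvPolynomial.rename_injective ι hι (by rw [h, map_zero]))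
    · exact Finset.prod_ne_zero_iff.2 fun e _ => MvPolynomial.X_ne_zero _
    · exact Finset.prod_ne_zero_iff.2 fun e _ => MvPolynomial.X_ne_zero _
  intro v hv s
  rw [_root_.map_mul, _root_.map_mul] at hv
  obtain ⟨hv12, hv3⟩ := mul_ne_zero_iff.1 hv
  obtain ⟨hv1, hv2⟩ := mul_ne_zero_iff.1 hv12
  rw [MvPolynomial.eval_rename] at hv1
  rw [map_prod] at hv2 hv3
  have hb : ∀ j : Fin q, v (Sum.inl (Sum.inr ⟨(f j, j), (hB _ _).2 rfl⟩)) ≠ 0 := by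
    intro j
    have := Finset.prod_ne_zero_iff.1 hv2 j (Finset.mem_univ _)
    simpa using this
  have hc : ∀ e : {e // e ∈ C''}, v (Sum.inr e) ≠ 0 := by
    intro e
    have := Finset.prod_ne_zero_iff.1 hv3 e (Finset.mem_univ _)
    simpa using this
  have hobsrank := hp' (v ∘ ι) hv1 s
  rw [rank_eq_card_iff_ker] at hobsrank
  rw [show n + q = Fintype.card (Fin n ⊕ Fin q) by simp, rank_eq_card_iff_ker]
  intro z hz
  set x : Fin n → ℂ := z ∘ Sum.inl with hx
  set u : Fin q → ℂ := z ∘ Sum.inr with hu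
  have hzeq : z = Sum.elim x u := by funext yy; cases yy <;> rfl
  rw [hzeq, Matrix.fromBlocks_mulVec] at hz
  have E1 : ∀ i : Fin n,
      ((Pattern.realize A fun e => v (Sum.inl (Sum.inl e))) *ᵥ x) i - s * x i +
        ((Pattern.realize B fun e => v (Sum.inl (Sum.inr e))) *ᵥ u) i = 0 := by
    intro i
    have h := congrFun hz (Sum.inl i)
    simp only [Sum.elim_inl, Sum.elim_comp_inl, Sum.elim_comp_inr, Pi.add_apply,
      Matrix.sub_mulVec, Matrix.smul_mulVec, Matrix.one_mulVec, Pi.sub_apply,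
      Pi.smul_apply, smul_eq_mul, Pi.zero_apply] at h
    linear_combination h
  have E2 : ∀ i : Fin (k + q),
      ((Pattern.realize C'' fun e => v (Sum.inr e)) *ᵥ x) i = 0 := by
    intro i
    have h := congrFun hz (Sum.inr i)
    simp only [Sum.elim_inr, Sum.elim_comp_inl, Sum.elim_comp_inr, Pi.add_apply,
      Matrix.zero_mulVec, Pi.zero_apply, add_zero] at h
    exact h
  have hxI : ∀ j : Fin q, x (f j) = 0 := by
    intro j
    have h := E2 (Fin.natAdd k j)
    rw [mulVec_realize_row_single C'' _ x (Fin.natAdd k j) (f j) (memNat j) (uniqNat j)] at h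
    rcases mul_eq_zero.1 h with h | h
    · exact absurd h (hc ⟨(Fin.natAdd k j, f j), memNat j⟩)
    · exact h
  have hxC : ∀ (i : Fin k) (y : Fin n ⊕ Fin q), (i, y) ∈ C' → x (Sum.elim id f y) = 0 := by
    intro i y hy
    obtain ⟨y₀, hy₀, hyu⟩ := hC' i
    have hyy : y = y₀ := hyu y hy
    subst hyy
    have h := E2 (Fin.castAdd q i)
    rw [mulVec_realize_row_single C'' _ x (Fin.castAdd q i) (Sum.elim id f y)
      (memCast i y hy) (uniqCast i y hy hyu)] at h
    rcases mul_eq_zero.1 h with h | h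
    · exact absurd h (hc ⟨(Fin.castAdd q i, Sum.elim id f y), memCast i y hy⟩)
    · exact h
  have hz'0 : Sum.elim x (0 : Fin q → ℂ) = 0 := by
    apply hobsrank
    rw [Matrix.fromRows_mulVec]
    funext yy
    cases yy with
    | inl yy =>
      simp only [Sum.elim_inl, Pi.zero_apply]
      rw [Matrix.sub_mulVec, Matrix.smul_mulVec, Matrix.one_mulVec]
      rw [realize_aux_eq, Matrix.fromBlocks_mulVec]
      cases yy with
      | inl i =>
        simp only [Sum.elim_inl, Sum.elim_comp_inl, Sum.elim_comp_inr, Pi.add_apply,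
          Matrix.mulVec_zero, Pi.zero_apply, add_zero, Pi.sub_apply, Pi.smul_apply, smul_eq_mul]
        by_cases hi : i ∈ I
        · have hF : ((Pattern.realize (A.filter fun e => e.1 ∉ I) (fun e =>
              (fun e => (v ∘ ι) (Sum.inl e)) ⟨(Sum.inl e.1.1, Sum.inl e.1.2),
                aux_mem_ll.2 ⟨(Finset.mem_filter.1 e.2).1, (Finset.mem_filter.1 e.2).2⟩⟩)) *ᵥ x) i
              = 0 := by
            apply mulVec_realize_row_zero
            intro j' hj'
            exact (Finset.mem_filter.1 hj').2 hi
          rw [hF]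
          obtain ⟨j, -, rfl⟩ := Finset.mem_image.1 hi
          rw [hxI j]
          ring
        · have hF : ((Pattern.realize (A.filter fun e => e.1 ∉ I) (fun e =>
              (fun e => (v ∘ ι) (Sum.inl e)) ⟨(Sum.inl e.1.1, Sum.inl e.1.2),
                aux_mem_ll.2 ⟨(Finset.mem_filter.1 e.2).1, (Finset.mem_filter.1 e.2).2⟩⟩)) *ᵥ x) i
              = ((Pattern.realize A fun e => v (Sum.inl (Sum.inl e))) *ᵥ x) i := by
            apply mulVec_congr_row
            intro j
            rw [realize_apply, realize_apply]
            by_cases hA : (i, j) ∈ A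
            · rw [dif_pos (Finset.mem_filter.2 ⟨hA, hi⟩), dif_pos hA]
              rfl
            · rw [dif_neg (fun hm => hA (Finset.mem_filter.1 hm).1), dif_neg hA]
          rw [hF]
          have h1 := E1 i
          rw [mulVec_realizeB_zero hB _ u i hi, add_zero] at h1
          exact h1
      | inr j =>
        simp only [Sum.elim_inr, Sum.elim_comp_inl, Sum.elim_comp_inr, Pi.add_apply,
          Matrix.zero_mulVec, Pi.zero_apply, add_zero, Pi.sub_apply, Pi.smul_apply,
          smul_eq_mul, mul_zero, sub_zero]
    | inr i =>
      simp only [Sum.elim_inr, Pi.zero_apply]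
      obtain ⟨y₀, hy₀, hyu⟩ := hC' i
      rw [mulVec_realize_row_single C' _ (Sum.elim x 0) i y₀ hy₀ (fun y' hy' => hyu y' hy')]
      cases y₀ with
      | inl j =>
        have hxj := hxC i (Sum.inl j) hy₀
        simp only [Sum.elim_inl]
        simp only [Sum.elim_inl, id_eq] at hxj
        rw [hxj, mul_zero]
      | inr j =>
        simp only [Sum.elim_inr, Pi.zero_apply, mul_zero]
  have hx0 : x = 0 := by
    funext i
    exact congrFun hz'0 (Sum.inl i)
  have hu0 : u = 0 := by
    funext j
    have h1 := E1 (f j)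
    rw [hx0, Matrix.mulVec_zero, mulVec_realizeB hf hB _ u j] at h1
    simp only [Pi.zero_apply, mul_zero, sub_zero, zero_add] at h1
    rcases mul_eq_zero.1 h1 with h | h
    · exact absurd h (hb j)
    · exact h
  rw [hzeq, hx0, hu0]
  funext yy
  cases yy <;> rfl

end Claim2

/-- For a structured system `(A, B)` with `q` dedicated inputs (input `j` drives state
`f j`, with `f` injective), the minimum number of dedicated sensors `C` making
`(A, B, C)` GSIO lies in the integer interval `[H(Â), H(Â) + q]`, where `Â` is the
auxiliary pattern. -/
theorem minimal_GSIO_bounds (n q : ℕ) (A : Finset (Fin n × Fin n))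
    (B : Finset (Fin n × Fin q)) (f : Fin q → Fin n) (hf : Function.Injective f)
    (hB : ∀ (i : Fin n) (j : Fin q), (i, j) ∈ B ↔ i = f j) :
    Hmin (auxPattern A B (Finset.image f Finset.univ)) ≤
        sInf {k : ℕ | ∃ C : Finset (Fin k × Fin n),
          (∀ i : Fin k, ∃! j : Fin n, (i, j) ∈ C) ∧ IsGSIO A B C} ∧
      sInf {k : ℕ | ∃ C : Finset (Fin k × Fin n),
          (∀ i : Fin k, ∃! j : Fin n, (i, j) ∈ C) ∧ IsGSIO A B C} ≤
        Hmin (auxPattern A B (Finset.image f Finset.univ)) + q := by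
  classical
  set SG : Set ℕ := {k : ℕ | ∃ C : Finset (Fin k × Fin n),
    (∀ i : Fin k, ∃! j : Fin n, (i, j) ∈ C) ∧ IsGSIO A B C} with hSG
  set SH : Set ℕ := {k : ℕ | ∃ C : Finset (Fin k × (Fin n ⊕ Fin q)),
    (∀ i : Fin k, ∃! y : Fin n ⊕ Fin q, (i, y) ∈ C) ∧
    IsStructObs (auxPattern A B (Finset.image f Finset.univ)) C} with hSH
  have hHmin : Hmin (auxPattern A B (Finset.image f Finset.univ)) = sInf SH := rfl
  have hGn : n ∈ SG := base_GSIO hf hB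
  have hsub : ∀ k ∈ SG, k ∈ SH := by
    rintro k ⟨C, hC, hG⟩
    exact obs_of_GSIO hf hB hC hG
  have h1 : sInf SH ≤ sInf SG := by
    have hmem : sInf SG ∈ SG := Nat.sInf_mem ⟨n, hGn⟩
    exact Nat.sInf_le (hsub _ hmem)
  have h2 : sInf SG ≤ sInf SH + q := by
    have hmem : sInf SH ∈ SH := Nat.sInf_mem ⟨n, hsub n hGn⟩
    obtain ⟨C', hC', hobs⟩ := hmem
    obtain ⟨C'', hded, hG⟩ := GSIO_of_obs hf hB C' hC' hobs
    exact Nat.sInf_le ⟨C'', hded, hG⟩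
  rw [hHmin]
  exact ⟨h1, h2⟩
end

section
/- Let G be a finite directed graph on vertex set V with edge relation r, let 'reach' denote the reflexive-transitive closure of r, and let u ∈ V. Assume that at least two distinct sink strongly connected components of G are reachable from u. For i = 1,2, let Y_i ⊆ V be a set of minimum cardinality subject to the condition that every vertex of V can reach some element of Y_i. Then the set {v ∈ V : u cannot reach any element of Y_1 in the digraph obtained from G by deleting vertex v} equals the set {v ∈ V : u cannot reach any element of Y_2 in the digraph obtained from G by deleting vertex v}. (Equivalently, the set of vertices lying on every directed path from u to Y_i — the essential vertex set V_ess({u},Y_i) — is the same for all minimum placements Y_i.) -/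
/-- `ReachAvoiding r v x y` means that in the digraph with edge relation `r` from which
the vertex `v` has been deleted (together with all edges incident to it), there is a
directed path from `x` to `y`. -/
def ReachAvoiding {V : Type*} (r : V → V → Prop) (v x y : V) : Prop :=
  x ≠ v ∧ y ≠ v ∧ Relation.ReflTransGen (fun a b => r a b ∧ a ≠ v ∧ b ≠ v) x y

section Aux

variable {V : Type*} (r : V → V → Prop)

/-- If `x` cannot reach `v`, then any path from `x` automatically avoids `v`. -/
lemma avoid_of_not_reach (v : V) {x z : V} (h : Relation.ReflTransGen r x z)
    (hxv : ¬ Relation.ReflTransGen r x v) :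
    Relation.ReflTransGen (fun a b => r a b ∧ a ≠ v ∧ b ≠ v) x z := by
  induction h with
  | refl => exact .refl
  | tail hxb hbc ih =>
    exact ih.tail ⟨hbc, fun hb => hxv (hb ▸ hxb), fun hc => hxv (hc ▸ (hxb.tail hbc))⟩

/-- If `v` cannot reach `z`, then any path to `z` automatically avoids `v`. -/
lemma avoid_of_not_reach_from (v : V) {z : V} (hvz : ¬ Relation.ReflTransGen r v z) :
    ∀ {x}, Relation.ReflTransGen r x z → x ≠ v →
      Relation.ReflTransGen (fun a b => r a b ∧ a ≠ v ∧ b ≠ v) x z := by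
  intro x h
  induction h using Relation.ReflTransGen.head_induction_on with
  | refl => intro _; exact .refl
  | head hac hcz ih =>
    intro ha
    have hc : _ ≠ v := fun hc => hvz (hc ▸ hcz)
    exact .head ⟨hac, ha, hc⟩ (ih hc)

/-- Every element of a minimum-cardinality reaching set lies in a sink SCC. -/
lemma sink_of_mem_min [Fintype V] [DecidableEq V] {Y : Finset V}
    (hY : ∀ v : V, ∃ y ∈ Y, Relation.ReflTransGen r v y)
    (hmin : ∀ Y' : Finset V, (∀ v : V, ∃ y ∈ Y', Relation.ReflTransGen r v y) →
      Y.card ≤ Y'.card)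
    {y : V} (hy : y ∈ Y) :
    ∀ w, Relation.ReflTransGen r y w → Relation.ReflTransGen r w y := by
  by_contra h
  push_neg at h
  obtain ⟨w, hyw, hwy⟩ := h
  have herase : ¬ ∀ v : V, ∃ y' ∈ Y.erase y, Relation.ReflTransGen r v y' := by
    intro h'
    have h1 := hmin _ h'
    have h2 : (Y.erase y).card < Y.card := Finset.card_erase_lt_of_mem hy
    omega
  push_neg at herase
  obtain ⟨z, hz⟩ := herase
  obtain ⟨y', hy', hzy'⟩ := hY z
  have hzy : Relation.ReflTransGen r z y := by
    by_cases hne : y' = y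
    · exact hne ▸ hzy'
    · exact absurd hzy' (hz y' (Finset.mem_erase.2 ⟨hne, hy'⟩))
  obtain ⟨y₁, hy₁, hwy₁⟩ := hY w
  have hy₁y : y₁ = y := by
    by_contra hne
    exact hz y₁ (Finset.mem_erase.2 ⟨hne, hy₁⟩) ((hzy.trans hyw).trans hwy₁)
  exact hwy (hy₁y ▸ hwy₁)

/-- Transfer of the "u still reaches Y after deleting v" property between
minimum placements. -/
lemma reach_transfer [Fintype V] [DecidableEq V] (u v : V)
    (hsinks : ∃ a b : V,
      Relation.ReflTransGen r u a ∧ Relation.ReflTransGen r u b ∧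
      (∀ w : V, Relation.ReflTransGen r a w → Relation.ReflTransGen r w a) ∧
      (∀ w : V, Relation.ReflTransGen r b w → Relation.ReflTransGen r w b) ∧
      ¬ (Relation.ReflTransGen r a b ∧ Relation.ReflTransGen r b a))
    (Y₁ Y₂ : Finset V)
    (hY₁ : ∀ v : V, ∃ y ∈ Y₁, Relation.ReflTransGen r v y)
    (hY₂ : ∀ v : V, ∃ y ∈ Y₂, Relation.ReflTransGen r v y)
    (hmin₁ : ∀ Y' : Finset V, (∀ v : V, ∃ y ∈ Y', Relation.ReflTransGen r v y) →
      Y₁.card ≤ Y'.card)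
    (hQ : ∃ y ∈ Y₁, ReachAvoiding r v u y) : ∃ y ∈ Y₂, ReachAvoiding r v u y := by
  obtain ⟨y, hyY, hu, hyv, hpath⟩ := hQ
  have hSink := sink_of_mem_min r hY₁ hmin₁ hyY
  by_cases hyreach : Relation.ReflTransGen r y v
  · -- `v` lies in the sink SCC of `y`; use one of the two other sink SCCs.
    have hvy : Relation.ReflTransGen r v y := hSink v hyreach
    obtain ⟨a, b, hua, hub, hsa, hsb, hnab⟩ := hsinks
    have hnotboth : ¬ (Relation.ReflTransGen r a v ∧ Relation.ReflTransGen r b v) := by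
      rintro ⟨h1, h2⟩
      have hay : Relation.ReflTransGen r a y := h1.trans hvy
      have hby : Relation.ReflTransGen r b y := h2.trans hvy
      have hya : Relation.ReflTransGen r y a := hsa _ hay
      have hyb : Relation.ReflTransGen r y b := hsb _ hby
      exact hnab ⟨hay.trans hyb, hby.trans hya⟩
    have hc : ∃ c : V, Relation.ReflTransGen r u c ∧
        (∀ w : V, Relation.ReflTransGen r c w → Relation.ReflTransGen r w c) ∧
        ¬ Relation.ReflTransGen r c v := by
      by_cases hav : Relation.ReflTransGen r a v
      · exact ⟨b, hub, hsb, fun hbv => hnotboth ⟨hav, hbv⟩⟩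
      · exact ⟨a, hua, hsa, hav⟩
    obtain ⟨c, huc, hsc, hcv⟩ := hc
    have hvc : ¬ Relation.ReflTransGen r v c := by
      intro h
      have hyc : Relation.ReflTransGen r y c := hyreach.trans h
      have hcy : Relation.ReflTransGen r c y := hSink _ hyc
      exact hcv (hcy.trans hyreach)
    have hpuc := avoid_of_not_reach_from r v hvc huc hu
    obtain ⟨y₂, hy₂, hcy₂⟩ := hY₂ c
    have hy₂v : y₂ ≠ v := fun h => hcv (h ▸ hcy₂)
    exact ⟨y₂, hy₂, hu, hy₂v, hpuc.trans (avoid_of_not_reach r v hcy₂ hcv)⟩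
  · -- `y` cannot reach `v`: continue from `y` to an element of `Y₂`.
    obtain ⟨y₂, hy₂, hyy₂⟩ := hY₂ y
    have hy₂v : y₂ ≠ v := fun h => hyreach (h ▸ hyy₂)
    exact ⟨y₂, hy₂, hu, hy₂v, hpath.trans (avoid_of_not_reach r v hyy₂ hyreach)⟩

end Aux

/-- In a finite digraph in which at least two distinct sink strongly connected
components are reachable from `u`, the set of vertices whose deletion destroys all
paths from `u` to `Y` (the essential vertex set `V_ess({u}, Y)`) is the same for every
minimum-cardinality set `Y` such that every vertex can reach `Y`. -/
theorem essential_set_independent_of_minimum_placement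
    (V : Type*) [Fintype V] [DecidableEq V] (r : V → V → Prop) (u : V)
    (hsinks : ∃ a b : V,
      Relation.ReflTransGen r u a ∧ Relation.ReflTransGen r u b ∧
      (∀ w : V, Relation.ReflTransGen r a w → Relation.ReflTransGen r w a) ∧
      (∀ w : V, Relation.ReflTransGen r b w → Relation.ReflTransGen r w b) ∧
      ¬ (Relation.ReflTransGen r a b ∧ Relation.ReflTransGen r b a))
    (Y₁ Y₂ : Finset V)
    (hY₁ : ∀ v : V, ∃ y ∈ Y₁, Relation.ReflTransGen r v y)
    (hY₂ : ∀ v : V, ∃ y ∈ Y₂, Relation.ReflTransGen r v y)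
    (hmin₁ : ∀ Y' : Finset V, (∀ v : V, ∃ y ∈ Y', Relation.ReflTransGen r v y) →
      Y₁.card ≤ Y'.card)
    (hmin₂ : ∀ Y' : Finset V, (∀ v : V, ∃ y ∈ Y', Relation.ReflTransGen r v y) →
      Y₂.card ≤ Y'.card) :
    {v : V | ¬ ∃ y ∈ Y₁, ReachAvoiding r v u y} =
      {v : V | ¬ ∃ y ∈ Y₂, ReachAvoiding r v u y} := by
  ext v
  simp only [Set.mem_setOf_eq]
  constructor
  · exact fun h1 h2 =>
      h1 (reach_transfer r u v hsinks Y₂ Y₁ hY₂ hY₁ hmin₂ h2)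
  · exact fun h2 h1 =>
      h2 (reach_transfer r u v hsinks Y₁ Y₂ hY₁ hY₂ hmin₁ h1)
end

section
/- Let V be a finite set, r a binary relation on V (the edge relation of a finite directed graph), 'reach' its reflexive-transitive closure, and Y ⊆ V. Then every vertex of V reaches some element of Y if and only if for every vertex v whose strongly connected component is a sink (i.e., every w with reach v w also satisfies reach w v), there exists y ∈ Y with reach v y. Equivalently, every vertex of the digraph can reach Y if and only if every sink strongly connected component contains an element of Y. -/
private lemma exists_sink_reach {V : Type*} [Fintype V] (r : V → V → Prop) :
    ∀ v : V, ∃ w : V, Relation.ReflTransGen r v w ∧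
      ∀ u : V, Relation.ReflTransGen r w u → Relation.ReflTransGen r u w := by
  have : IsTrans V (fun a b => Relation.ReflTransGen r b a ∧ ¬ Relation.ReflTransGen r a b) :=
    ⟨fun a b c hab hbc => ⟨hbc.1.trans hab.1, fun h => hbc.2 (hab.1.trans h)⟩⟩
  have : IsIrrefl V (fun a b => Relation.ReflTransGen r b a ∧ ¬ Relation.ReflTransGen r a b) :=
    ⟨fun a h => h.2 h.1⟩
  have wf : WellFounded (fun a b => Relation.ReflTransGen r b a ∧ ¬ Relation.ReflTransGen r a b) :=
    Finite.wellFounded_of_trans_of_irrefl _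
  intro v
  induction v using wf.induction with
  | _ v ih =>
    by_cases h : ∀ u : V, Relation.ReflTransGen r v u → Relation.ReflTransGen r u v
    · exact ⟨v, Relation.ReflTransGen.refl, h⟩
    · push_neg at h
      obtain ⟨u, hvu, huv⟩ := h
      obtain ⟨w, huw, hw⟩ := ih u ⟨hvu, huv⟩
      exact ⟨w, hvu.trans huw, hw⟩

/-- In a finite directed graph with edge relation `r`, every vertex can reach the set
`Y` if and only if every vertex `v` whose strongly connected component is a sink
(every vertex reachable from `v` can reach `v` back) can reach `Y`; equivalently, every
sink strongly connected component contains (a vertex that can reach) an element of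
`Y`. -/
theorem reach_cover_iff_sink_SCC_cover (V : Type*) [Fintype V]
    (r : V → V → Prop) (Y : Set V) :
    (∀ v : V, ∃ y ∈ Y, Relation.ReflTransGen r v y) ↔
      (∀ v : V, (∀ w : V, Relation.ReflTransGen r v w → Relation.ReflTransGen r w v) →
        ∃ y ∈ Y, Relation.ReflTransGen r v y) := by
  constructor
  · intro h v _
    exact h v
  · intro h v
    obtain ⟨w, hvw, hw⟩ := exists_sink_reach r v
    obtain ⟨y, hy, hwy⟩ := h w hw
    exact ⟨y, hy, hvw.trans hwy⟩
end
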